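/- Let f : ℝ^d × (0, ∞) → ℝ be such that for every a > 0 the function f_a := f(·, a) is C¹, and suppose that for every x ∈ ℝ^d, f(y, a) → F(x) as (y, a) → (x, 0), where F : ℝ^d → ℝ is continuous. If x* is a local minimum of F, then 0 ∈ D_F(x*), where D_F(x*) := {v ∈ ℝ^d : there exist x_n → x*, a_n → 0 with a_n > 0 and ∇f_{a_n}(x_n) → v}. -/

import Mathlib

open Filter Topology

theorem local_min_is_DF_critical_for_smoothing {d : ℕ}
    (f : EuclideanSpace ℝ (Fin d) → ℝ → ℝ) (F : EuclideanSpace ℝ (Fin d) → ℝ)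
    (hC1 : ∀ a : ℝ, 0 < a → ContDiff ℝ 1 (fun x => f x a))
    (hF : Continuous F)
    (hconv : ∀ x : EuclideanSpace ℝ (Fin d),
      Tendsto (fun p : EuclideanSpace ℝ (Fin d) × ℝ => f p.1 p.2)
        ((𝓝 x) ×ˢ (𝓝[>] (0 : ℝ))) (𝓝 (F x)))
    (xstar : EuclideanSpace ℝ (Fin d)) (hmin : IsLocalMin F xstar) :
    (0 : EuclideanSpace ℝ (Fin d)) ∈
      {v : EuclideanSpace ℝ (Fin d) |
        ∃ (xs : ℕ → EuclideanSpace ℝ (Fin d)) (as : ℕ → ℝ),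
          Tendsto xs atTop (𝓝 xstar) ∧ Tendsto as atTop (𝓝 0) ∧ (∀ n, 0 < as n) ∧
          Tendsto (fun n => gradient (fun x => f x (as n)) (xs n)) atTop (𝓝 v)} := by
  -- a radius on which xstar is a minimum of F
  obtain ⟨r, hr0, hr⟩ : ∃ r > 0, ∀ y ∈ Metric.closedBall xstar r, F xstar ≤ F y := by
    rcases Metric.eventually_nhds_iff_ball.1 hmin with ⟨R, hR0, hR⟩
    exact ⟨R / 2, by positivity, fun y hy => hR y
      (lt_of_le_of_lt (Metric.mem_closedBall.1 hy) (by linarith))⟩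
  set K := Metric.closedBall xstar r with hK
  have hKc : IsCompact K := isCompact_closedBall _ _
  have hxK : xstar ∈ K := Metric.mem_closedBall_self hr0.le
  -- uniform convergence of f_a to F on K
  have hlu : TendstoLocallyUniformly (fun (a : ℝ) (x : EuclideanSpace ℝ (Fin d)) => f x a) F (𝓝[>] (0 : ℝ)) := by
    rw [tendstoLocallyUniformly_iff_forall_tendsto]
    intro x
    have h1 : Tendsto (fun y : ℝ × EuclideanSpace ℝ (Fin d) => F y.2) ((𝓝[>] (0:ℝ)) ×ˢ 𝓝 x) (𝓝 (F x)) :=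
      (hF.tendsto x).comp tendsto_snd
    have h2 : Tendsto (fun y : ℝ × EuclideanSpace ℝ (Fin d) => f y.2 y.1) ((𝓝[>] (0:ℝ)) ×ˢ 𝓝 x) (𝓝 (F x)) :=
      (hconv x).comp (tendsto_snd.prodMk tendsto_fst)
    exact (h1.prodMk h2).mono_right (by rw [← nhds_prod_eq]; exact nhds_le_uniformity _)
  have huK : TendstoUniformlyOn (fun (a : ℝ) (x : EuclideanSpace ℝ (Fin d)) => f x a) F (𝓝[>] (0 : ℝ)) K :=
    (tendstoLocallyUniformlyOn_iff_tendstoUniformlyOn_of_compact hKc).1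
      (hlu.tendstoLocallyUniformlyOn)
  have hunif : ∀ δ : ℝ, 0 < δ → ∀ᶠ a in 𝓝[>] (0:ℝ), ∀ y ∈ K, |F y - f y a| < δ := by
    intro δ hδ
    have := (Metric.tendstoUniformlyOn_iff.1 huK) δ hδ
    filter_upwards [this] with a ha y hy
    simpa [Real.dist_eq] using ha y hy
  -- the sequence of scales
  set ε : ℕ → ℝ := fun n => r / (n + 2) with hε
  have hεpos : ∀ n, 0 < ε n := fun n => by positivity
  have hεlt : ∀ n, ε n < r := by
    intro n
    rw [hε]
    rw [div_lt_iff₀ (by positivity)]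
    nlinarith [Nat.cast_nonneg (α := ℝ) n]
  have hεto : Tendsto ε atTop (𝓝 0) := by
    have h2 : Tendsto (fun n : ℕ => ((n : ℝ) + 2)) atTop atTop :=
      tendsto_atTop_add_const_right _ 2 tendsto_natCast_atTop_atTop
    exact tendsto_const_nhds.div_atTop h2
  -- the key claim for each n
  have key : ∀ n : ℕ, ∃ (a : ℝ) (x : EuclideanSpace ℝ (Fin d)), 0 < a ∧ a ≤ ε n ∧ dist x xstar ≤ ε n ∧
      ‖gradient (fun y => f y a) x‖ ≤ 2 * (ε n) ^ 2 := by
    intro n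
    set e := ε n with he
    have he0 : 0 < e := hεpos n
    set δ : ℝ := e ^ 3 / 2 with hδdef
    have hδ0 : 0 < δ := by positivity
    -- choose a suitable a
    have hev : ∀ᶠ a in 𝓝[>] (0:ℝ), (∀ y ∈ K, |F y - f y a| < δ) ∧ a ≤ e := by
      filter_upwards [hunif δ hδ0,
        eventually_nhdsWithin_of_eventually_nhds
          (Filter.Tendsto.eventually_le_const (by linarith : (0:ℝ) < e) tendsto_id)] with a h1 h2
      exact ⟨h1, h2⟩
    obtain ⟨a, ⟨hafar, halee⟩, hapos⟩ := (hev.and self_mem_nhdsWithin).exists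
    have hapos : 0 < a := hapos
    -- minimize the penalized function on K
    set g : EuclideanSpace ℝ (Fin d) → ℝ := fun x => f x a + e * ‖x - xstar‖ ^ 2 with hg
    have hgc : Continuous g := by
      have h1 : Continuous fun x : EuclideanSpace ℝ (Fin d) => f x a := (hC1 a hapos).continuous
      fun_prop
    obtain ⟨z, hzK, hzmin⟩ := hKc.exists_isMinOn ⟨xstar, hxK⟩ hgc.continuousOn
    -- z is close to xstar
    have hgz : g z ≤ f xstar a := by
      have := hzmin hxK
      simpa [hg] using this
    have hz1 : F xstar - δ < f z a := by
      have := hafar z hzK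
      have h2 := hr z hzK
      cases abs_lt.1 this with
      | intro h3 h4 => linarith
    have hz2 : f xstar a < F xstar + δ := by
      have := hafar xstar hxK
      cases abs_lt.1 this with
      | intro h3 h4 => linarith
    have hzsq : e * ‖z - xstar‖ ^ 2 ≤ 2 * δ := by
      have : f z a + e * ‖z - xstar‖ ^ 2 ≤ f xstar a := hgz
      linarith
    have hsq2 : ‖z - xstar‖ ^ 2 ≤ e ^ 2 := by
      rw [hδdef] at hzsq; nlinarith
    have hznorm : ‖z - xstar‖ ≤ e := by
      nlinarith [norm_nonneg (z - xstar)]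
    -- z is in the interior of K, hence a local min of g
    have hzlt : dist z xstar < r := by
      rw [dist_eq_norm]
      exact lt_of_le_of_lt hznorm (hεlt n)
    have hKnz : K ∈ 𝓝 z := by
      rw [hK]
      exact Metric.closedBall_mem_nhds_of_mem (by simpa [Metric.mem_ball] using hzlt)
    have hzloc : IsLocalMin g z := hzmin.isLocalMin hKnz
    -- derivatives
    have hdfa : DifferentiableAt ℝ (fun x => f x a) z :=
      ((hC1 a hapos).differentiable one_ne_zero) z
    have hsq : HasFDerivAt (fun x : EuclideanSpace ℝ (Fin d) => ‖x - xstar‖ ^ 2)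
        (2 • (innerSL ℝ (z - xstar))) z := by
      have h1 : HasFDerivAt (fun x : EuclideanSpace ℝ (Fin d) => x - xstar) (ContinuousLinearMap.id ℝ (EuclideanSpace ℝ (Fin d))) z :=
        (hasFDerivAt_id z).sub_const xstar
      simpa using h1.norm_sq
    have hgd : HasFDerivAt g
        (fderiv ℝ (fun x => f x a) z + e • (2 • (innerSL ℝ (z - xstar)))) z :=
      hdfa.hasFDerivAt.add (hsq.const_smul e)
    have hzero : fderiv ℝ (fun x => f x a) z + e • (2 • (innerSL ℝ (z - xstar))) = 0 :=
      hzloc.hasFDerivAt_eq_zero hgd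
    have hfd : fderiv ℝ (fun x => f x a) z = -(e • (2 • (innerSL ℝ (z - xstar)))) := by
      rw [eq_neg_iff_add_eq_zero]; exact hzero
    -- norm of the gradient
    have hnorm : ‖gradient (fun y => f y a) z‖ ≤ 2 * e ^ 2 := by
      rw [gradient, LinearIsometryEquiv.norm_map, hfd, norm_neg,
        ← Nat.cast_smul_eq_nsmul ℝ 2 (innerSL ℝ (z - xstar)), smul_smul, norm_smul,
        innerSL_apply_norm, Real.norm_eq_abs, abs_of_pos (by positivity)]
      push_cast
      nlinarith [norm_nonneg (z - xstar)]
    have hdz : dist z xstar ≤ e := by rw [dist_eq_norm]; exact hznorm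
    exact ⟨a, z, hapos, halee, hdz, hnorm⟩
  -- assemble the sequences
  choose as xs hapos halee hdist hgrad using key
  refine ⟨xs, as, ?_, ?_, hapos, ?_⟩
  · rw [tendsto_iff_dist_tendsto_zero]
    exact squeeze_zero (fun n => dist_nonneg) hdist hεto
  · exact squeeze_zero (fun n => (hapos n).le) halee hεto
  · rw [tendsto_zero_iff_norm_tendsto_zero]
    refine squeeze_zero (fun n => norm_nonneg _) hgrad ?_
    have : Tendsto (fun n => 2 * (ε n) ^ 2) atTop (𝓝 (2 * 0 ^ 2)) :=
      ((hεto.pow 2).const_mul 2)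
    simpa using this
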